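/- arXiv:1607.00533 — 8 statements merged into one kernel-verified Lean document; each statement's English description precedes it below -/
import Mathlib

section
/- Let M ≥ 2, let p1, p2 ∈ ℝ^M be probability vectors, let ε1, ε2 ≥ 0, and let w0 ∈ ℝ^M be a strictly positive probability vector. Suppose α* ∈ ℝ^M is an optimal solution of the quadratic vector problem, and let v ∈ ℝ^M be any unit vector with Σ_{j=1}^M v_j·√(w0_j) = 0. Then the rank-one matrix A* with entries A*_{ij} = α*_i · v_j is feasible for the matrix problem and is an optimal solution of the matrix problem, i.e., F(A*) equals the supremum of F over the feasible set of the matrix problem. -/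
open Real

noncomputable section

/-- Objective of the quadratic vector problem:
`Q(α) = (1/2)·(Σ_i (p1_i − p2_i) α_i)²`. -/
def Qobj {M : ℕ} (p1 p2 : Fin M → ℝ) (α : Fin M → ℝ) : ℝ :=
  (1 / 2) * (∑ i, (p1 i - p2 i) * α i) ^ 2

/-- Feasible set of the quadratic vector problem:
`(1/2)·Σ_i p1_i α_i² ≤ ε1` and `(1/2)·Σ_i p2_i α_i² ≤ ε2`. -/
def QFeas {M : ℕ} (p1 p2 : Fin M → ℝ) (ε1 ε2 : ℝ) : Set (Fin M → ℝ) :=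
  {α | (1 / 2) * ∑ i, p1 i * (α i) ^ 2 ≤ ε1 ∧ (1 / 2) * ∑ i, p2 i * (α i) ^ 2 ≤ ε2}

/-- Objective of the matrix problem:
`F(A) = (1/2)·‖Σ_i (p1_i − p2_i) A_i‖²` (squared Euclidean norm of the
indicated combination of the rows of `A`). -/
def Fobj {M : ℕ} (p1 p2 : Fin M → ℝ) (A : Matrix (Fin M) (Fin M) ℝ) : ℝ :=
  (1 / 2) * ∑ j, (∑ i, (p1 i - p2 i) * A i j) ^ 2

/-- Feasible set of the matrix problem:
`(1/2)·Σ_i p1_i ‖A_i‖² ≤ ε1`, `(1/2)·Σ_i p2_i ‖A_i‖² ≤ ε2`, and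
`Σ_j A_{ij} √(w0_j) = 0` for every `i`. -/
def MFeas {M : ℕ} (p1 p2 : Fin M → ℝ) (ε1 ε2 : ℝ) (w0 : Fin M → ℝ) :
    Set (Matrix (Fin M) (Fin M) ℝ) :=
  {A | (1 / 2) * ∑ i, p1 i * ∑ j, (A i j) ^ 2 ≤ ε1 ∧
       (1 / 2) * ∑ i, p2 i * ∑ j, (A i j) ^ 2 ≤ ε2 ∧
       ∀ i, ∑ j, A i j * Real.sqrt (w0 j) = 0}

/-- if `α*` is an optimal solution of the quadratic vector problem and
`v` is a unit vector orthogonal to `√w0`, then the rank-one matrix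
`A*_{ij} = α*_i v_j` is feasible for the matrix problem and optimal for it, i.e.
`F(A*)` equals the supremum of `F` over the feasible set of the matrix problem. -/
theorem rankOne_optimal_matrix {M : ℕ} (hM : 2 ≤ M)
    (p1 p2 : Fin M → ℝ)
    (hp1 : ∀ i, 0 ≤ p1 i) (hp1s : ∑ i, p1 i = 1)
    (hp2 : ∀ i, 0 ≤ p2 i) (hp2s : ∑ i, p2 i = 1)
    (ε1 ε2 : ℝ) (hε1 : 0 ≤ ε1) (hε2 : 0 ≤ ε2)
    (w0 : Fin M → ℝ) (hw0 : ∀ j, 0 < w0 j) (hw0s : ∑ j, w0 j = 1)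
    (αs : Fin M → ℝ) (hαs_feas : αs ∈ QFeas p1 p2 ε1 ε2)
    (hαs_opt : ∀ β ∈ QFeas p1 p2 ε1 ε2, Qobj p1 p2 β ≤ Qobj p1 p2 αs)
    (v : Fin M → ℝ) (hv_unit : ∑ j, (v j) ^ 2 = 1)
    (hv_orth : ∑ j, v j * Real.sqrt (w0 j) = 0) :
    (fun i j => αs i * v j : Matrix (Fin M) (Fin M) ℝ) ∈ MFeas p1 p2 ε1 ε2 w0 ∧
      Fobj p1 p2 (fun i j => αs i * v j) =
        sSup (Fobj p1 p2 '' MFeas p1 p2 ε1 ε2 w0) := by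
  classical
  -- Qobj αs is nonnegative (0 is feasible)
  have h0feas : (0 : Fin M → ℝ) ∈ QFeas p1 p2 ε1 ε2 := by
    constructor <;> simp [hε1, hε2]
  have hQ0 : 0 ≤ Qobj p1 p2 αs := by
    have := hαs_opt 0 h0feas
    simpa [Qobj] using this
  -- row norms of A*
  have hrow : ∀ i, ∑ j, (αs i * v j) ^ 2 = (αs i) ^ 2 := by
    intro i
    have : ∑ j, (αs i * v j) ^ 2 = (αs i) ^ 2 * ∑ j, (v j) ^ 2 := by
      rw [Finset.mul_sum]; apply Finset.sum_congr rfl; intro j _; ring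
    rw [this, hv_unit, mul_one]
  have hfeas : (fun i j => αs i * v j : Matrix (Fin M) (Fin M) ℝ) ∈ MFeas p1 p2 ε1 ε2 w0 := by
    refine ⟨?_, ?_, ?_⟩
    · simpa [hrow] using hαs_feas.1
    · simpa [hrow] using hαs_feas.2
    · intro i
      have : ∑ j, αs i * v j * Real.sqrt (w0 j) = αs i * ∑ j, v j * Real.sqrt (w0 j) := by
        rw [Finset.mul_sum]; apply Finset.sum_congr rfl; intro j _; ring
      rw [this, hv_orth, mul_zero]
  -- value of Fobj at A*
  have hval : Fobj p1 p2 (fun i j => αs i * v j) = Qobj p1 p2 αs := by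
    unfold Fobj Qobj
    have h1 : ∀ j, (∑ i, (p1 i - p2 i) * (αs i * v j)) ^ 2
        = (∑ i, (p1 i - p2 i) * αs i) ^ 2 * (v j) ^ 2 := by
      intro j
      have : ∑ i, (p1 i - p2 i) * (αs i * v j) = (∑ i, (p1 i - p2 i) * αs i) * v j := by
        rw [Finset.sum_mul]; apply Finset.sum_congr rfl; intro i _; ring
      rw [this, mul_pow]
    simp only [h1]
    rw [← Finset.mul_sum, hv_unit, mul_one]
  -- key bound: any feasible matrix has Fobj ≤ Qobj αs
  have key : ∀ A ∈ MFeas p1 p2 ε1 ε2 w0, Fobj p1 p2 A ≤ Qobj p1 p2 αs := by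
    intro A hA
    set s : Fin M → ℝ := fun j => ∑ i, (p1 i - p2 i) * A i j with hs_def
    have hF : Fobj p1 p2 A = (1 / 2) * ∑ j, s j ^ 2 := rfl
    by_cases hz : ∑ j, s j ^ 2 = 0
    · rw [hF, hz, mul_zero]; exact hQ0
    · have hSnn : 0 ≤ ∑ j, s j ^ 2 := Finset.sum_nonneg fun j _ => sq_nonneg _
      have hSpos : 0 < ∑ j, s j ^ 2 := lt_of_le_of_ne hSnn (Ne.symm hz)
      set t : ℝ := Real.sqrt (∑ j, s j ^ 2) with ht_def
      have ht : 0 < t := Real.sqrt_pos.2 hSpos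
      have ht2 : t ^ 2 = ∑ j, s j ^ 2 := Real.sq_sqrt hSnn
      set α : Fin M → ℝ := fun i => (∑ j, A i j * s j) / t with hα_def
      have hα2 : ∀ i, α i ^ 2 ≤ ∑ j, (A i j) ^ 2 := by
        intro i
        have hCS := Finset.sum_mul_sq_le_sq_mul_sq Finset.univ (fun j => A i j) s
        have : α i ^ 2 = (∑ j, A i j * s j) ^ 2 / (∑ j, s j ^ 2) := by
          rw [hα_def, div_pow, ht2]
        rw [this, div_le_iff₀ hSpos]
        exact hCS
      have hαfeas : α ∈ QFeas p1 p2 ε1 ε2 := by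
        constructor
        · refine le_trans (mul_le_mul_of_nonneg_left (Finset.sum_le_sum fun i _ =>
            mul_le_mul_of_nonneg_left (hα2 i) (hp1 i)) (by norm_num)) hA.1
        · refine le_trans (mul_le_mul_of_nonneg_left (Finset.sum_le_sum fun i _ =>
            mul_le_mul_of_nonneg_left (hα2 i) (hp2 i)) (by norm_num)) hA.2.1
      have hαval : ∑ i, (p1 i - p2 i) * α i = t := by
        have h1 : ∑ i, (p1 i - p2 i) * α i
            = (∑ i, ∑ j, (p1 i - p2 i) * (A i j * s j)) / t := by
          rw [Finset.sum_div]
          apply Finset.sum_congr rfl; intro i _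
          show (p1 i - p2 i) * ((∑ j, A i j * s j) / t) = _
          rw [← mul_div_assoc, Finset.mul_sum]
        rw [h1, Finset.sum_comm]
        have h2 : ∀ j, ∑ i, (p1 i - p2 i) * (A i j * s j) = s j ^ 2 := by
          intro j
          have h3 : ∑ i, (p1 i - p2 i) * (A i j * s j) = (∑ i, (p1 i - p2 i) * A i j) * s j := by
            rw [Finset.sum_mul]; apply Finset.sum_congr rfl; intro i _; ring
          rw [h3]; show s j * s j = s j ^ 2; ring
        simp only [h2]
        rw [← ht2, sq, mul_div_assoc, div_self ht.ne', mul_one]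
      have hq : Qobj p1 p2 α = Fobj p1 p2 A := by
        rw [Qobj, hαval, hF, ht2]
      calc Fobj p1 p2 A = Qobj p1 p2 α := hq.symm
        _ ≤ Qobj p1 p2 αs := hαs_opt α hαfeas
  refine ⟨hfeas, ?_⟩
  have hmem : Fobj p1 p2 (fun i j => αs i * v j) ∈ Fobj p1 p2 '' MFeas p1 p2 ε1 ε2 w0 :=
    ⟨_, hfeas, rfl⟩
  apply le_antisymm
  · apply le_csSup
    · refine ⟨Qobj p1 p2 αs, ?_⟩
      rintro x ⟨A, hA, rfl⟩
      exact key A hA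
    · exact hmem
  · apply csSup_le ⟨_, hmem⟩
    rintro x ⟨A, hA, rfl⟩
    rw [hval]
    exact key A hA
end
end

section
/- Let p1, p2 ∈ ℝ^M be probability vectors and write Δ_i = p1_i − p2_i. For every real M×M matrix A with rows A_1,…,A_M and every unit vector e ∈ ℝ^M, one has (1/2)·‖Σ_{i=1}^M Δ_i A_i‖² ≤ (1/2)·(Σ_{i=1}^M |Δ_i|·‖A_i‖)², and the rank-at-most-one matrix A' whose i-th row is A'_i = sign(Δ_i)·‖A_i‖·e satisfies ‖A'_i‖ = ‖A_i‖ for every i and (1/2)·‖Σ_{i=1}^M Δ_i A'_i‖² = (1/2)·(Σ_{i=1}^M |Δ_i|·‖A_i‖)². Consequently, for any constraints of the form (1/2)·Σ_i p1_i‖A_i‖² ≤ ε1 and (1/2)·Σ_i p2_i‖A_i‖² ≤ ε2, every feasible A is dominated in objective value by a feasible matrix of rank at most one. -/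
open Real

/-- with `Δ_i = p1_i − p2_i`, for any matrix `A` and unit vector `e`:
(i) `(1/2)‖Σ_i Δ_i A_i‖² ≤ (1/2)(Σ_i |Δ_i| ‖A_i‖)²`;
(ii) the matrix `A'` with rows `A'_i = sign(Δ_i)·‖A_i‖·e` satisfies `‖A'_i‖ = ‖A_i‖`
for every `i` and `(1/2)‖Σ_i Δ_i A'_i‖² = (1/2)(Σ_i |Δ_i| ‖A_i‖)²`;
(iii) consequently, every `A` feasible for the two ellipsoidal constraints is
dominated in objective value by a feasible matrix of rank at most one. -/
theorem rankOne_domination {M : ℕ}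
    (p1 p2 : Fin M → ℝ)
    (hp1 : ∀ i, 0 ≤ p1 i) (hp1s : ∑ i, p1 i = 1)
    (hp2 : ∀ i, 0 ≤ p2 i) (hp2s : ∑ i, p2 i = 1)
    (Δ : Fin M → ℝ) (hΔ : ∀ i, Δ i = p1 i - p2 i)
    (A : Matrix (Fin M) (Fin M) ℝ)
    (e : Fin M → ℝ) (he_unit : ∑ j, (e j) ^ 2 = 1)
    (A' : Matrix (Fin M) (Fin M) ℝ)
    (hA' : ∀ i j, A' i j =
      (if 0 ≤ Δ i then (1 : ℝ) else -1) * Real.sqrt (∑ k, (A i k) ^ 2) * e j) :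
    ((1 / 2) * ∑ j, (∑ i, Δ i * A i j) ^ 2 ≤
        (1 / 2) * (∑ i, |Δ i| * Real.sqrt (∑ k, (A i k) ^ 2)) ^ 2) ∧
    (∀ i, Real.sqrt (∑ j, (A' i j) ^ 2) = Real.sqrt (∑ j, (A i j) ^ 2)) ∧
    ((1 / 2) * ∑ j, (∑ i, Δ i * A' i j) ^ 2 =
        (1 / 2) * (∑ i, |Δ i| * Real.sqrt (∑ k, (A i k) ^ 2)) ^ 2) ∧
    (∀ ε1 ε2 : ℝ,
      (1 / 2) * ∑ i, p1 i * ∑ j, (A i j) ^ 2 ≤ ε1 →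
      (1 / 2) * ∑ i, p2 i * ∑ j, (A i j) ^ 2 ≤ ε2 →
      ∃ B : Matrix (Fin M) (Fin M) ℝ, B.rank ≤ 1 ∧
        (1 / 2) * ∑ i, p1 i * ∑ j, (B i j) ^ 2 ≤ ε1 ∧
        (1 / 2) * ∑ i, p2 i * ∑ j, (B i j) ^ 2 ≤ ε2 ∧
        (1 / 2) * ∑ j, (∑ i, Δ i * A i j) ^ 2 ≤
          (1 / 2) * ∑ j, (∑ i, Δ i * B i j) ^ 2) := by
  classical
  set r : Fin M → ℝ := fun i => Real.sqrt (∑ k, (A i k) ^ 2) with hrdef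
  have hsumnn : ∀ i, (0:ℝ) ≤ ∑ k, (A i k) ^ 2 :=
    fun i => Finset.sum_nonneg fun k _ => sq_nonneg _
  have hrsq : ∀ i, (r i) ^ 2 = ∑ k, (A i k) ^ 2 := fun i => Real.sq_sqrt (hsumnn i)
  have hrnn : ∀ i, 0 ≤ r i := fun i => Real.sqrt_nonneg _
  set s : Fin M → ℝ := fun i => if 0 ≤ Δ i then (1:ℝ) else -1 with hsdef
  have hΔs : ∀ i, Δ i * s i = |Δ i| := by
    intro i
    by_cases h : 0 ≤ Δ i
    · simp [hsdef, h, abs_of_nonneg h]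
    · simp [hsdef, h, abs_of_neg (lt_of_not_ge h)]
  -- part (i)
  have part1 : ∑ j, (∑ i, Δ i * A i j) ^ 2 ≤ (∑ i, |Δ i| * r i) ^ 2 := by
    set v : Fin M → EuclideanSpace ℝ (Fin M) := fun i => WithLp.toLp 2 (fun j => A i j) with hv
    have hnorm : ∀ i, ‖v i‖ = r i := by
      intro i
      rw [EuclideanSpace.norm_eq]
      congr 1
      exact Finset.sum_congr rfl fun k _ => by simp [hv, sq_abs]
    have happ : ∀ j, (∑ i, Δ i • v i) j = ∑ i, Δ i * A i j := by
      intro j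
      rw [WithLp.ofLp_sum, Finset.sum_apply]
      exact Finset.sum_congr rfl fun i _ => rfl
    have hL : ∑ j, (∑ i, Δ i * A i j) ^ 2 = ‖∑ i, Δ i • v i‖ ^ 2 := by
      rw [EuclideanSpace.norm_eq, Real.sq_sqrt (by positivity)]
      refine Finset.sum_congr rfl fun j _ => ?_
      rw [happ j, Real.norm_eq_abs, sq_abs]
    rw [hL]
    have h1 : ‖∑ i, Δ i • v i‖ ≤ ∑ i, |Δ i| * r i := by
      refine (norm_sum_le _ _).trans ?_
      refine Finset.sum_le_sum fun i _ => ?_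
      rw [norm_smul, hnorm, Real.norm_eq_abs]
    exact pow_le_pow_left₀ (norm_nonneg _) h1 2
  -- row norms of A'
  have hA'sq : ∀ i, ∑ j, (A' i j) ^ 2 = ∑ j, (A i j) ^ 2 := by
    intro i
    have : ∀ j, (A' i j) ^ 2 = (r i) ^ 2 * (e j) ^ 2 := by
      intro j
      rw [hA' i j]
      by_cases h : 0 ≤ Δ i <;> simp [hsdef, h] <;> ring
    rw [Finset.sum_congr rfl fun j _ => this j, ← Finset.mul_sum, he_unit, mul_one, hrsq]
  have part2 : ∀ i, Real.sqrt (∑ j, (A' i j) ^ 2) = Real.sqrt (∑ j, (A i j) ^ 2) :=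
    fun i => by rw [hA'sq i]
  -- part (ii) equality
  have part3 : ∑ j, (∑ i, Δ i * A' i j) ^ 2 = (∑ i, |Δ i| * r i) ^ 2 := by
    have hrow : ∀ j, ∑ i, Δ i * A' i j = (∑ i, |Δ i| * r i) * e j := by
      intro j
      rw [Finset.sum_mul]
      refine Finset.sum_congr rfl fun i _ => ?_
      rw [hA' i j, ← hΔs i]
      show Δ i * (s i * r i * e j) = Δ i * s i * r i * e j
      ring
    calc ∑ j, (∑ i, Δ i * A' i j) ^ 2
        = ∑ j, (∑ i, |Δ i| * r i) ^ 2 * (e j) ^ 2 := by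
          refine Finset.sum_congr rfl fun j _ => ?_
          rw [hrow j, mul_pow]
      _ = (∑ i, |Δ i| * r i) ^ 2 := by rw [← Finset.mul_sum, he_unit, mul_one]
  refine ⟨by linarith [part1], part2, by rw [part3], ?_⟩
  -- part (iii)
  intro ε1 ε2 h1 h2
  refine ⟨A', ?_, ?_, ?_, ?_⟩
  · -- rank ≤ 1
    have hB : A' = Matrix.vecMulVec (fun i => s i * r i) e := by
      ext i j
      rw [hA' i j]
      rfl
    rw [hB, Matrix.vecMulVec_eq (Fin 1)]
    refine (Matrix.rank_mul_le_left _ _).trans ?_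
    exact (Matrix.rank_le_card_width _).trans (by simp)
  · calc (1/2) * ∑ i, p1 i * ∑ j, (A' i j) ^ 2
        = (1/2) * ∑ i, p1 i * ∑ j, (A i j) ^ 2 := by
          congr 1
          exact Finset.sum_congr rfl fun i _ => by rw [hA'sq i]
      _ ≤ ε1 := h1
  · calc (1/2) * ∑ i, p2 i * ∑ j, (A' i j) ^ 2
        = (1/2) * ∑ i, p2 i * ∑ j, (A i j) ^ 2 := by
          congr 1
          exact Finset.sum_congr rfl fun i _ => by rw [hA'sq i]
      _ ≤ ε2 := h2
  · rw [part3] at *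
    linarith [part1]
end

section
/- Let p1, p2 ∈ ℝ^M be strictly positive probability vectors with p1 ≠ p2, let ε1, ε2 > 0, let v* = (p1 − p2)/‖p1 − p2‖, and let S1 = Σ_{i=1}^M (v*_i)²/p1_i. If (Σ_{i=1}^M (v*_i)²·p2_i/(p1_i)²)/S1 < ε2/ε1, then the vector α* ∈ ℝ^M with entries α*_i = √(2ε1/S1)·v*_i/p1_i, as well as −α*, is an optimal solution of the quadratic vector problem. -/
open Real

noncomputable section

/-- if only the first constraint is active, i.e.
`(Σ_i (v*_i)² p2_i/(p1_i)²)/S1 < ε2/ε1` with `S1 = Σ_i (v*_i)²/p1_i`, then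
`α*_i = √(2ε1/S1)·v*_i/p1_i`, as well as `−α*`, is an optimal solution of the
quadratic vector problem. -/
theorem optimal_alpha_first_constraint_active {M : ℕ}
    (p1 p2 : Fin M → ℝ)
    (hp1 : ∀ i, 0 < p1 i) (hp1s : ∑ i, p1 i = 1)
    (hp2 : ∀ i, 0 < p2 i) (hp2s : ∑ i, p2 i = 1)
    (hne : p1 ≠ p2)
    (ε1 ε2 : ℝ) (hε1 : 0 < ε1) (hε2 : 0 < ε2)
    (vs : Fin M → ℝ)
    (hvs : ∀ i, vs i = (p1 i - p2 i) / Real.sqrt (∑ k, (p1 k - p2 k) ^ 2))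
    (S1 : ℝ) (hS1 : S1 = ∑ i, (vs i) ^ 2 / p1 i)
    (hactive : (∑ i, (vs i) ^ 2 * p2 i / (p1 i) ^ 2) / S1 < ε2 / ε1)
    (αs : Fin M → ℝ)
    (hαs : ∀ i, αs i = Real.sqrt (2 * ε1 / S1) * vs i / p1 i) :
    (αs ∈ QFeas p1 p2 ε1 ε2 ∧
      ∀ β ∈ QFeas p1 p2 ε1 ε2, Qobj p1 p2 β ≤ Qobj p1 p2 αs) ∧
    (-αs ∈ QFeas p1 p2 ε1 ε2 ∧
      ∀ β ∈ QFeas p1 p2 ε1 ε2, Qobj p1 p2 β ≤ Qobj p1 p2 (-αs)) := by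
  classical
  -- positivity of ‖p1 - p2‖²
  have hN2pos : 0 < ∑ k, (p1 k - p2 k) ^ 2 := by
    obtain ⟨i0, hi0⟩ : ∃ i, p1 i ≠ p2 i := by
      by_contra h; push_neg at h; exact hne (funext h)
    exact Finset.sum_pos' (fun k _ => sq_nonneg _)
      ⟨i0, Finset.mem_univ i0, sq_pos_of_ne_zero (sub_ne_zero.mpr hi0)⟩
  set N : ℝ := Real.sqrt (∑ k, (p1 k - p2 k) ^ 2) with hNdef
  have hNpos : 0 < N := Real.sqrt_pos.mpr hN2pos
  have hNne : N ≠ 0 := ne_of_gt hNpos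
  have hdvs : ∀ i, p1 i - p2 i = N * vs i := by
    intro i; rw [hvs i]; field_simp
  -- S1 > 0
  have hS1pos : 0 < S1 := by
    obtain ⟨i0, hi0⟩ : ∃ i, p1 i ≠ p2 i := by
      by_contra h; push_neg at h; exact hne (funext h)
    have hvs0 : vs i0 ≠ 0 := by
      rw [hvs i0]
      exact div_ne_zero (sub_ne_zero.mpr hi0) hNne
    rw [hS1]
    exact Finset.sum_pos' (fun k _ => div_nonneg (sq_nonneg _) (hp1 k).le)
      ⟨i0, Finset.mem_univ i0, div_pos (sq_pos_of_ne_zero hvs0) (hp1 i0)⟩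
  set c : ℝ := Real.sqrt (2 * ε1 / S1) with hcdef
  have hc2 : c ^ 2 = 2 * ε1 / S1 := Real.sq_sqrt (by positivity)
  -- key sums
  have hsum1 : ∑ i, p1 i * (αs i) ^ 2 = 2 * ε1 := by
    have : ∀ i, p1 i * (αs i) ^ 2 = c ^ 2 * (vs i ^ 2 / p1 i) := by
      intro i
      rw [hαs i]
      have hpi := (hp1 i).ne'
      field_simp
    rw [Finset.sum_congr rfl (fun i _ => this i), ← Finset.mul_sum, ← hS1, hc2]
    field_simp
  have hsum2 : ∑ i, p2 i * (αs i) ^ 2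
      = c ^ 2 * ∑ i, vs i ^ 2 * p2 i / (p1 i) ^ 2 := by
    rw [Finset.mul_sum]
    refine Finset.sum_congr rfl (fun i _ => ?_)
    rw [hαs i]
    have := (hp1 i).ne'
    field_simp
  have hsumobj : ∑ i, (p1 i - p2 i) * αs i = N * c * S1 := by
    have : ∀ i, (p1 i - p2 i) * αs i = N * c * (vs i ^ 2 / p1 i) := by
      intro i
      rw [hdvs i, hαs i]
      have := (hp1 i).ne'
      field_simp
    rw [Finset.sum_congr rfl (fun i _ => this i), ← Finset.mul_sum, ← hS1]
  -- feasibility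
  have hT : ε1 * ((∑ i, vs i ^ 2 * p2 i / (p1 i) ^ 2) / S1) < ε2 := by
    have h := hactive
    rw [div_lt_div_iff₀ hS1pos hε1] at h
    have heq : ε1 * ((∑ i, vs i ^ 2 * p2 i / (p1 i) ^ 2) / S1)
        = (∑ i, vs i ^ 2 * p2 i / (p1 i) ^ 2) * ε1 / S1 := by ring
    rw [heq, div_lt_iff₀ hS1pos]
    linarith
  have hfeas1 : (1 : ℝ) / 2 * ∑ i, p1 i * (αs i) ^ 2 ≤ ε1 := by
    rw [hsum1]; linarith
  have hfeas2 : (1 : ℝ) / 2 * ∑ i, p2 i * (αs i) ^ 2 ≤ ε2 := by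
    rw [hsum2, hc2]
    have : 2 * ε1 / S1 * ∑ i, vs i ^ 2 * p2 i / (p1 i) ^ 2
        = 2 * (ε1 * ((∑ i, vs i ^ 2 * p2 i / (p1 i) ^ 2) / S1)) := by
      field_simp
    rw [this]; linarith
  have hfeas : αs ∈ QFeas p1 p2 ε1 ε2 := ⟨hfeas1, hfeas2⟩
  -- value of objective at αs
  have hQαs : Qobj p1 p2 αs = ε1 * N ^ 2 * S1 := by
    rw [Qobj, hsumobj]
    have : (N * c * S1) ^ 2 = N ^ 2 * (c ^ 2) * S1 ^ 2 := by ring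
    rw [this, hc2]
    field_simp
  -- optimality bound
  have hopt : ∀ β ∈ QFeas p1 p2 ε1 ε2, Qobj p1 p2 β ≤ Qobj p1 p2 αs := by
    intro β hβ
    obtain ⟨hβ1, hβ2⟩ := hβ
    have hsumβ : ∑ i, (p1 i - p2 i) * β i = N * ∑ i, vs i * β i := by
      rw [Finset.mul_sum]
      exact Finset.sum_congr rfl (fun i _ => by rw [hdvs i]; ring)
    have hCS : (∑ i, vs i * β i) ^ 2 ≤ S1 * ∑ i, p1 i * (β i) ^ 2 := by
      have h1 : ∀ i, vs i * β i
          = (vs i / Real.sqrt (p1 i)) * (Real.sqrt (p1 i) * β i) := by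
        intro i
        have hs : Real.sqrt (p1 i) ≠ 0 := ne_of_gt (Real.sqrt_pos.mpr (hp1 i))
        field_simp
      have h2 : ∀ i, (vs i / Real.sqrt (p1 i)) ^ 2 = vs i ^ 2 / p1 i := by
        intro i
        rw [div_pow, Real.sq_sqrt (hp1 i).le]
      have h3 : ∀ i, (Real.sqrt (p1 i) * β i) ^ 2 = p1 i * (β i) ^ 2 := by
        intro i
        rw [mul_pow, Real.sq_sqrt (hp1 i).le]
      calc (∑ i, vs i * β i) ^ 2
          = (∑ i, (vs i / Real.sqrt (p1 i)) * (Real.sqrt (p1 i) * β i)) ^ 2 := by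
            rw [Finset.sum_congr rfl (fun i _ => h1 i)]
        _ ≤ (∑ i, (vs i / Real.sqrt (p1 i)) ^ 2)
              * ∑ i, (Real.sqrt (p1 i) * β i) ^ 2 :=
            Finset.sum_mul_sq_le_sq_mul_sq _ _ _
        _ = S1 * ∑ i, p1 i * (β i) ^ 2 := by
            rw [Finset.sum_congr rfl (fun i _ => h2 i),
                Finset.sum_congr rfl (fun i _ => h3 i), ← hS1]
    have hβsum : ∑ i, p1 i * (β i) ^ 2 ≤ 2 * ε1 := by linarith
    have hCS2 : (∑ i, vs i * β i) ^ 2 ≤ S1 * (2 * ε1) := by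
      calc (∑ i, vs i * β i) ^ 2 ≤ S1 * ∑ i, p1 i * (β i) ^ 2 := hCS
        _ ≤ S1 * (2 * ε1) := by
            exact mul_le_mul_of_nonneg_left hβsum hS1pos.le
    rw [Qobj, hsumβ, hQαs, mul_pow]
    nlinarith [sq_nonneg N, hNpos]
  -- -αs
  have hnegsum1 : ∀ i, p1 i * ((-αs) i) ^ 2 = p1 i * (αs i) ^ 2 := by
    intro i; simp
  have hnegsum2 : ∀ i, p2 i * ((-αs) i) ^ 2 = p2 i * (αs i) ^ 2 := by
    intro i; simp
  have hQneg : Qobj p1 p2 (-αs) = Qobj p1 p2 αs := by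
    rw [Qobj, Qobj]
    congr 1
    have : ∑ i, (p1 i - p2 i) * (-αs) i = -∑ i, (p1 i - p2 i) * αs i := by
      rw [← Finset.sum_neg_distrib]
      exact Finset.sum_congr rfl (fun i _ => by simp)
    rw [this, neg_pow]
    ring
  have hfeasneg : -αs ∈ QFeas p1 p2 ε1 ε2 := by
    constructor
    · rw [Finset.sum_congr rfl (fun i _ => hnegsum1 i)]; exact hfeas1
    · rw [Finset.sum_congr rfl (fun i _ => hnegsum2 i)]; exact hfeas2
  exact ⟨⟨hfeas, hopt⟩, hfeasneg, fun β hβ => (hQneg ▸ hopt β hβ)⟩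
end
end

section
/- Let p1, p2 ∈ ℝ^M be strictly positive probability vectors with p1 ≠ p2, let ε1, ε2 > 0, let v* = (p1 − p2)/‖p1 − p2‖, and let S2 = Σ_{i=1}^M (v*_i)²/p2_i. If (Σ_{i=1}^M (v*_i)²·p1_i/(p2_i)²)/S2 < ε1/ε2, then the vector α* ∈ ℝ^M with entries α*_i = √(2ε2/S2)·v*_i/p2_i, as well as −α*, is an optimal solution of the quadratic vector problem. -/
open Real

noncomputable section

/-- if only the second constraint is active, i.e.
`(Σ_i (v*_i)² p1_i/(p2_i)²)/S2 < ε1/ε2` with `S2 = Σ_i (v*_i)²/p2_i`, then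
`α*_i = √(2ε2/S2)·v*_i/p2_i`, as well as `−α*`, is an optimal solution of the
quadratic vector problem. -/
theorem optimal_alpha_second_constraint_active {M : ℕ}
    (p1 p2 : Fin M → ℝ)
    (hp1 : ∀ i, 0 < p1 i) (hp1s : ∑ i, p1 i = 1)
    (hp2 : ∀ i, 0 < p2 i) (hp2s : ∑ i, p2 i = 1)
    (hne : p1 ≠ p2)
    (ε1 ε2 : ℝ) (hε1 : 0 < ε1) (hε2 : 0 < ε2)
    (vs : Fin M → ℝ)
    (hvs : ∀ i, vs i = (p1 i - p2 i) / Real.sqrt (∑ k, (p1 k - p2 k) ^ 2))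
    (S2 : ℝ) (hS2 : S2 = ∑ i, (vs i) ^ 2 / p2 i)
    (hactive : (∑ i, (vs i) ^ 2 * p1 i / (p2 i) ^ 2) / S2 < ε1 / ε2)
    (αs : Fin M → ℝ)
    (hαs : ∀ i, αs i = Real.sqrt (2 * ε2 / S2) * vs i / p2 i) :
    (αs ∈ QFeas p1 p2 ε1 ε2 ∧
      ∀ β ∈ QFeas p1 p2 ε1 ε2, Qobj p1 p2 β ≤ Qobj p1 p2 αs) ∧
    (-αs ∈ QFeas p1 p2 ε1 ε2 ∧
      ∀ β ∈ QFeas p1 p2 ε1 ε2, Qobj p1 p2 β ≤ Qobj p1 p2 (-αs)) := by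
  have hd : ∃ i, p1 i - p2 i ≠ 0 := by
    by_contra h
    push_neg at h
    exact hne (funext fun i => by linarith [h i, sub_eq_zero.mp (h i)])
  obtain ⟨i0, hi0⟩ := hd
  have hsum_pos : 0 < ∑ k, (p1 k - p2 k) ^ 2 :=
    Finset.sum_pos' (fun k _ => sq_nonneg _) ⟨i0, Finset.mem_univ i0, by positivity⟩
  set N := Real.sqrt (∑ k, (p1 k - p2 k) ^ 2) with hNdef
  have hN : 0 < N := Real.sqrt_pos.mpr hsum_pos
  have hdvs : ∀ i, p1 i - p2 i = N * vs i := by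
    intro i; rw [hvs i]; field_simp
  have hvs0 : vs i0 ≠ 0 := by
    rw [hvs i0]; exact div_ne_zero hi0 hN.ne'
  have hS2pos : 0 < S2 := by
    rw [hS2]
    refine Finset.sum_pos' (fun k _ => div_nonneg (sq_nonneg _) (hp2 k).le)
      ⟨i0, Finset.mem_univ i0, div_pos (by positivity) (hp2 i0)⟩
  have hc : (0:ℝ) ≤ 2 * ε2 / S2 := by positivity
  have hαsq : ∀ i, αs i ^ 2 = (2 * ε2 / S2) * (vs i ^ 2 / p2 i ^ 2) := by
    intro i
    rw [hαs i, div_pow, mul_pow, Real.sq_sqrt hc]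
    ring
  -- constraint 2 holds with equality
  have hC2 : ∑ i, p2 i * (αs i) ^ 2 = 2 * ε2 := by
    have : ∀ i, p2 i * (αs i) ^ 2 = (2 * ε2 / S2) * (vs i ^ 2 / p2 i) := by
      intro i
      have hp := (hp2 i).ne'
      rw [hαsq i]
      field_simp
    rw [Finset.sum_congr rfl fun i _ => this i, ← Finset.mul_sum, ← hS2]
    field_simp
  -- constraint 1 holds strictly
  have hC1 : (1 / 2) * ∑ i, p1 i * (αs i) ^ 2 ≤ ε1 := by
    have h1 : ∑ i, p1 i * (αs i) ^ 2
        = (2 * ε2 / S2) * ∑ i, (vs i) ^ 2 * p1 i / (p2 i) ^ 2 := by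
      rw [Finset.mul_sum]
      refine Finset.sum_congr rfl fun i _ => ?_
      rw [hαsq i]; ring
    rw [h1]
    set T := ∑ i, (vs i) ^ 2 * p1 i / (p2 i) ^ 2 with hT
    have h2 : T / S2 < ε1 / ε2 := hactive
    have h3 : ε2 * (T / S2) < ε2 * (ε1 / ε2) := by
      exact mul_lt_mul_of_pos_left h2 hε2
    have h4 : ε2 * (ε1 / ε2) = ε1 := by field_simp
    have : (1 / 2) * ((2 * ε2 / S2) * T) = ε2 * (T / S2) := by
      field_simp
    linarith
  have hfeas : αs ∈ QFeas p1 p2 ε1 ε2 := by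
    refine ⟨hC1, ?_⟩
    rw [hC2]; linarith
  have hfeasneg : -αs ∈ QFeas p1 p2 ε1 ε2 := by
    have e : ∀ q : Fin M → ℝ, ∑ i, q i * ((-αs) i) ^ 2 = ∑ i, q i * (αs i) ^ 2 := by
      intro q; refine Finset.sum_congr rfl fun i _ => ?_
      simp [Pi.neg_apply]
    constructor
    · rw [e p1]; exact hC1
    · rw [e p2, hC2]; linarith
  -- value at αs
  have hsumvs : ∑ i, vs i * αs i = Real.sqrt (2 * ε2 / S2) * S2 := by
    have : ∀ i, vs i * αs i = Real.sqrt (2 * ε2 / S2) * (vs i ^ 2 / p2 i) := by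
      intro i
      have hp := (hp2 i).ne'
      rw [hαs i]; field_simp
    rw [Finset.sum_congr rfl fun i _ => this i, ← Finset.mul_sum, ← hS2]
  have hval : Qobj p1 p2 αs = N ^ 2 * ε2 * S2 := by
    unfold Qobj
    have h1 : ∑ i, (p1 i - p2 i) * αs i = N * (Real.sqrt (2 * ε2 / S2) * S2) := by
      rw [← hsumvs, Finset.mul_sum]
      exact Finset.sum_congr rfl fun i _ => by rw [hdvs i]; ring
    rw [h1]
    have : (N * (Real.sqrt (2 * ε2 / S2) * S2)) ^ 2
        = N ^ 2 * (2 * ε2 / S2) * S2 ^ 2 := by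
      rw [mul_pow, mul_pow, Real.sq_sqrt hc]; ring
    rw [this]
    field_simp
  -- upper bound for any feasible β
  have hbound : ∀ β ∈ QFeas p1 p2 ε1 ε2, Qobj p1 p2 β ≤ N ^ 2 * ε2 * S2 := by
    intro β hβ
    obtain ⟨_, hβ2⟩ := hβ
    have hβ2' : ∑ i, p2 i * (β i) ^ 2 ≤ 2 * ε2 := by linarith
    have hCS : (∑ i, vs i * β i) ^ 2 ≤ S2 * ∑ i, p2 i * (β i) ^ 2 := by
      have := Finset.sum_mul_sq_le_sq_mul_sq Finset.univ
        (fun i => vs i / Real.sqrt (p2 i)) (fun i => Real.sqrt (p2 i) * β i)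
      have e1 : ∀ i : Fin M, vs i / Real.sqrt (p2 i) * (Real.sqrt (p2 i) * β i)
          = vs i * β i := by
        intro i
        have hs : Real.sqrt (p2 i) ≠ 0 := by
          have := hp2 i; positivity
        field_simp
      have e2 : ∀ i : Fin M, (vs i / Real.sqrt (p2 i)) ^ 2 = vs i ^ 2 / p2 i := by
        intro i; rw [div_pow, Real.sq_sqrt (hp2 i).le]
      have e3 : ∀ i : Fin M, (Real.sqrt (p2 i) * β i) ^ 2 = p2 i * (β i) ^ 2 := by
        intro i; rw [mul_pow, Real.sq_sqrt (hp2 i).le]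
      rw [Finset.sum_congr rfl fun i _ => e1 i,
          Finset.sum_congr rfl fun i _ => e2 i,
          Finset.sum_congr rfl fun i _ => e3 i, ← hS2] at this
      exact this
    have hpβ : 0 ≤ ∑ i, p2 i * (β i) ^ 2 :=
      Finset.sum_nonneg fun i _ => mul_nonneg (hp2 i).le (sq_nonneg _)
    have hCS2 : (∑ i, vs i * β i) ^ 2 ≤ S2 * (2 * ε2) :=
      hCS.trans (mul_le_mul_of_nonneg_left hβ2' hS2pos.le)
    unfold Qobj
    have h1 : ∑ i, (p1 i - p2 i) * β i = N * ∑ i, vs i * β i := by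
      rw [Finset.mul_sum]
      exact Finset.sum_congr rfl fun i _ => by rw [hdvs i]; ring
    rw [h1, mul_pow]
    nlinarith [sq_nonneg N, hN.le]
  have hvalneg : Qobj p1 p2 (-αs) = Qobj p1 p2 αs := by
    unfold Qobj
    have : ∑ i, (p1 i - p2 i) * (-αs) i = -∑ i, (p1 i - p2 i) * αs i := by
      rw [← Finset.sum_neg_distrib]
      exact Finset.sum_congr rfl fun i _ => by simp
    rw [this, neg_pow]
    ring
  refine ⟨⟨hfeas, fun β hβ => ?_⟩, ⟨hfeasneg, fun β hβ => ?_⟩⟩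
  · rw [hval]; exact hbound β hβ
  · rw [hvalneg, hval]; exact hbound β hβ
end
end

section
/- Let p1, p2 ∈ ℝ^M be strictly positive probability vectors with p1 ≠ p2, let ε1, ε2 > 0, let λ* = ‖p1 − p2‖² and v* = (p1 − p2)/‖p1 − p2‖. Suppose η1 > 0 and η2 > 0 satisfy Σ_{i=1}^M p1_i·(v*_i)²/(η1·p1_i + η2·p2_i)² = 8ε1/(λ*)² and Σ_{i=1}^M p2_i·(v*_i)²/(η1·p1_i + η2·p2_i)² = 8ε2/(λ*)². Then the vector α* ∈ ℝ^M with entries α*_i = (λ*/2)·v*_i/(η1·p1_i + η2·p2_i), as well as −α*, is an optimal solution of the quadratic vector problem, and α* satisfies both constraints with equality: (1/2)Σ_i p1_i (α*_i)² = ε1 and (1/2)Σ_i p2_i (α*_i)² = ε2. -/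
open Real

noncomputable section

set_option maxHeartbeats 1000000 in
/-- if `η1, η2 > 0` satisfy the two KKT equations
`Σ_i p1_i (v*_i)²/(η1 p1_i + η2 p2_i)² = 8ε1/(λ*)²` and
`Σ_i p2_i (v*_i)²/(η1 p1_i + η2 p2_i)² = 8ε2/(λ*)²`, then
`α*_i = (λ*/2)·v*_i/(η1 p1_i + η2 p2_i)`, as well as `−α*`, is an optimal solution
of the quadratic vector problem, and `α*` satisfies both constraints with equality. -/
theorem optimal_alpha_both_constraints_active {M : ℕ}
    (p1 p2 : Fin M → ℝ)
    (hp1 : ∀ i, 0 < p1 i) (hp1s : ∑ i, p1 i = 1)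
    (hp2 : ∀ i, 0 < p2 i) (hp2s : ∑ i, p2 i = 1)
    (hne : p1 ≠ p2)
    (ε1 ε2 : ℝ) (hε1 : 0 < ε1) (hε2 : 0 < ε2)
    (lam : ℝ) (hlam : lam = ∑ i, (p1 i - p2 i) ^ 2)
    (vs : Fin M → ℝ)
    (hvs : ∀ i, vs i = (p1 i - p2 i) / Real.sqrt (∑ k, (p1 k - p2 k) ^ 2))
    (η1 η2 : ℝ) (hη1 : 0 < η1) (hη2 : 0 < η2)
    (heq1 : ∑ i, p1 i * (vs i) ^ 2 / (η1 * p1 i + η2 * p2 i) ^ 2 = 8 * ε1 / lam ^ 2)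
    (heq2 : ∑ i, p2 i * (vs i) ^ 2 / (η1 * p1 i + η2 * p2 i) ^ 2 = 8 * ε2 / lam ^ 2)
    (αs : Fin M → ℝ)
    (hαs : ∀ i, αs i = (lam / 2) * vs i / (η1 * p1 i + η2 * p2 i)) :
    (αs ∈ QFeas p1 p2 ε1 ε2 ∧
      ∀ β ∈ QFeas p1 p2 ε1 ε2, Qobj p1 p2 β ≤ Qobj p1 p2 αs) ∧
    (-αs ∈ QFeas p1 p2 ε1 ε2 ∧
      ∀ β ∈ QFeas p1 p2 ε1 ε2, Qobj p1 p2 β ≤ Qobj p1 p2 (-αs)) ∧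
    (1 / 2) * ∑ i, p1 i * (αs i) ^ 2 = ε1 ∧
    (1 / 2) * ∑ i, p2 i * (αs i) ^ 2 = ε2 := by
  -- basic positivity facts
  have hlampos : 0 < lam := by
    rw [hlam]
    obtain ⟨i, hi⟩ : ∃ i, p1 i ≠ p2 i := by
      by_contra h; push_neg at h; exact hne (funext h)
    refine Finset.sum_pos' (fun j _ => sq_nonneg _)
      ⟨i, Finset.mem_univ i, ?_⟩
    have : p1 i - p2 i ≠ 0 := sub_ne_zero.mpr hi
    positivity
  have hlamne : lam ≠ 0 := ne_of_gt hlampos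
  have hw : ∀ i, 0 < η1 * p1 i + η2 * p2 i := fun i => by
    have := hp1 i; have := hp2 i; positivity
  have hwne : ∀ i, (η1 * p1 i + η2 * p2 i) ≠ 0 := fun i => ne_of_gt (hw i)
  set sl : ℝ := Real.sqrt lam with hsl
  have hslpos : 0 < sl := Real.sqrt_pos.mpr hlampos
  have hslne : sl ≠ 0 := ne_of_gt hslpos
  have hsl2 : sl ^ 2 = lam := Real.sq_sqrt hlampos.le
  have hvs' : ∀ i, vs i = (p1 i - p2 i) / sl := by
    intro i; rw [hvs i, ← hlam]
  have hvs2 : ∀ i, vs i ^ 2 = (p1 i - p2 i) ^ 2 / lam := by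
    intro i; rw [hvs' i, div_pow, hsl2]
  -- shorthand
  set S : ℝ := ∑ i, (p1 i - p2 i) ^ 2 / (η1 * p1 i + η2 * p2 i) with hS
  have hSnonneg : 0 ≤ S := Finset.sum_nonneg fun i _ => by
    have := hw i; positivity
  -- constraint equalities
  have hterm1 : ∀ i, p1 i * (αs i) ^ 2
      = lam ^ 2 / 4 * (p1 i * (vs i) ^ 2 / (η1 * p1 i + η2 * p2 i) ^ 2) := by
    intro i; rw [hαs i]; field_simp [hwne i]; ring
  have hterm2 : ∀ i, p2 i * (αs i) ^ 2
      = lam ^ 2 / 4 * (p2 i * (vs i) ^ 2 / (η1 * p1 i + η2 * p2 i) ^ 2) := by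
    intro i; rw [hαs i]; field_simp [hwne i]; ring
  have hc1 : (1 / 2) * ∑ i, p1 i * (αs i) ^ 2 = ε1 := by
    simp_rw [hterm1]
    rw [← Finset.mul_sum, heq1]
    field_simp
    ring
  have hc2 : (1 / 2) * ∑ i, p2 i * (αs i) ^ 2 = ε2 := by
    simp_rw [hterm2]
    rw [← Finset.mul_sum, heq2]
    field_simp
    ring
  -- key identity: lam * S = 8 * (η1 * ε1 + η2 * ε2)
  have hkey : lam * S = 8 * (η1 * ε1 + η2 * ε2) := by
    have hterm : ∀ i, η1 * (p1 i * (vs i) ^ 2 / (η1 * p1 i + η2 * p2 i) ^ 2)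
        + η2 * (p2 i * (vs i) ^ 2 / (η1 * p1 i + η2 * p2 i) ^ 2)
        = (p1 i - p2 i) ^ 2 / (η1 * p1 i + η2 * p2 i) / lam := by
      intro i
      rw [hvs2 i]
      field_simp [hwne i]
    have h : ∑ i, (η1 * (p1 i * (vs i) ^ 2 / (η1 * p1 i + η2 * p2 i) ^ 2)
        + η2 * (p2 i * (vs i) ^ 2 / (η1 * p1 i + η2 * p2 i) ^ 2))
        = η1 * (8 * ε1 / lam ^ 2) + η2 * (8 * ε2 / lam ^ 2) := by
      rw [Finset.sum_add_distrib, ← Finset.mul_sum, ← Finset.mul_sum, heq1, heq2]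
    rw [Finset.sum_congr rfl (fun i _ => hterm i), ← Finset.sum_div, ← hS] at h
    field_simp at h
    have h2 : lam * S * lam = 8 * (η1 * ε1 + η2 * ε2) * lam := by
      linear_combination lam * h
    exact mul_right_cancel₀ hlamne h2
  -- value of the objective at αs
  have hsum_d_αs : ∑ i, (p1 i - p2 i) * αs i = lam / (2 * sl) * S := by
    rw [hS, Finset.mul_sum]
    refine Finset.sum_congr rfl fun i _ => ?_
    rw [hαs i, hvs' i]
    field_simp
  have hQαs : Qobj p1 p2 αs = lam * S ^ 2 / 8 := by
    rw [Qobj, hsum_d_αs, mul_pow, div_pow, mul_pow, hsl2]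
    field_simp
    ring
  -- optimality
  have hopt : ∀ β ∈ QFeas p1 p2 ε1 ε2, Qobj p1 p2 β ≤ Qobj p1 p2 αs := by
    intro β hβ
    obtain ⟨hβ1, hβ2⟩ := hβ
    have hCS := Finset.sum_mul_sq_le_sq_mul_sq Finset.univ
      (fun i => (p1 i - p2 i) / Real.sqrt (η1 * p1 i + η2 * p2 i))
      (fun i => Real.sqrt (η1 * p1 i + η2 * p2 i) * β i)
    have e1 : ∀ i, (p1 i - p2 i) / Real.sqrt (η1 * p1 i + η2 * p2 i)
        * (Real.sqrt (η1 * p1 i + η2 * p2 i) * β i) = (p1 i - p2 i) * β i := by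
      intro i
      have hs : Real.sqrt (η1 * p1 i + η2 * p2 i) ≠ 0 :=
        ne_of_gt (Real.sqrt_pos.mpr (hw i))
      calc (p1 i - p2 i) / Real.sqrt (η1 * p1 i + η2 * p2 i)
          * (Real.sqrt (η1 * p1 i + η2 * p2 i) * β i)
          = (p1 i - p2 i) * β i
            * (Real.sqrt (η1 * p1 i + η2 * p2 i) / Real.sqrt (η1 * p1 i + η2 * p2 i)) := by
            ring
        _ = (p1 i - p2 i) * β i := by rw [div_self hs, mul_one]
    have e2 : ∀ i, ((p1 i - p2 i) / Real.sqrt (η1 * p1 i + η2 * p2 i)) ^ 2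
        = (p1 i - p2 i) ^ 2 / (η1 * p1 i + η2 * p2 i) := by
      intro i
      rw [div_pow, Real.sq_sqrt (hw i).le]
    have e3 : ∀ i, (Real.sqrt (η1 * p1 i + η2 * p2 i) * β i) ^ 2
        = (η1 * p1 i + η2 * p2 i) * β i ^ 2 := by
      intro i
      rw [mul_pow, Real.sq_sqrt (hw i).le]
    simp only [e1, e2, e3] at hCS
    have hwβ : ∑ i, (η1 * p1 i + η2 * p2 i) * β i ^ 2
        ≤ 2 * (η1 * ε1 + η2 * ε2) := by
      have hsplit : ∑ i, (η1 * p1 i + η2 * p2 i) * β i ^ 2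
          = η1 * ∑ i, p1 i * β i ^ 2 + η2 * ∑ i, p2 i * β i ^ 2 := by
        rw [Finset.mul_sum, Finset.mul_sum, ← Finset.sum_add_distrib]
        exact Finset.sum_congr rfl fun i _ => by ring
      rw [hsplit]
      have h1 : ∑ i, p1 i * β i ^ 2 ≤ 2 * ε1 := by linarith
      have h2 : ∑ i, p2 i * β i ^ 2 ≤ 2 * ε2 := by linarith
      nlinarith
    have hbound : (∑ i, (p1 i - p2 i) * β i) ^ 2 ≤ S * (2 * (η1 * ε1 + η2 * ε2)) :=
      le_trans hCS (by
        rw [← hS]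
        exact mul_le_mul_of_nonneg_left hwβ hSnonneg)
    rw [Qobj, hQαs]
    nlinarith [hkey, hbound]
  have hfeas : αs ∈ QFeas p1 p2 ε1 ε2 := ⟨le_of_eq hc1, le_of_eq hc2⟩
  have hnegsum1 : ∑ i, p1 i * ((-αs) i) ^ 2 = ∑ i, p1 i * (αs i) ^ 2 :=
    Finset.sum_congr rfl fun i _ => by simp [Pi.neg_apply]
  have hnegsum2 : ∑ i, p2 i * ((-αs) i) ^ 2 = ∑ i, p2 i * (αs i) ^ 2 :=
    Finset.sum_congr rfl fun i _ => by simp [Pi.neg_apply]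
  have hnegfeas : -αs ∈ QFeas p1 p2 ε1 ε2 := by
    refine ⟨?_, ?_⟩
    · rw [hnegsum1, hc1]
    · rw [hnegsum2, hc2]
  have hQneg : Qobj p1 p2 (-αs) = Qobj p1 p2 αs := by
    rw [Qobj, Qobj]
    have hneg : ∑ i, (p1 i - p2 i) * (-αs) i = -∑ i, (p1 i - p2 i) * αs i := by
      rw [← Finset.sum_neg_distrib]
      exact Finset.sum_congr rfl fun i _ => by simp [Pi.neg_apply]
    rw [hneg, neg_pow]
    ring
  exact ⟨⟨hfeas, hopt⟩, ⟨hnegfeas, fun β hβ => (hQneg ▸ hopt β hβ)⟩, hc1, hc2⟩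
end
end

section
/- Let M ≥ 2, let p1, p2 ∈ ℝ^M be probability vectors, let ε1, ε2 ≥ 0, and let w0 ∈ ℝ^M be a strictly positive probability vector. Suppose α* ∈ ℝ^M is an optimal solution of the quadratic vector problem and v ∈ ℝ^M is a unit vector with Σ_{j=1}^M v_j·√(w0_j) = 0. Then the matrix Θ* with entries Θ*_{ij} = α*_i · v_j · √(w0_j) is feasible for the Θ-problem (in particular each row of Θ* sums to 0) and is an optimal solution of the Θ-problem, i.e., G(Θ*) equals the supremum of G over the feasible set of the Θ-problem. -/
open Real

noncomputable section

/-- Objective of the Θ-problem: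
`G(Θ) = (1/2)·Σ_j (Σ_i (p1_i − p2_i) Θ_{ij})² / w0_j`. -/
def Gobj {M : ℕ} (p1 p2 w0 : Fin M → ℝ) (Θ : Matrix (Fin M) (Fin M) ℝ) : ℝ :=
  (1 / 2) * ∑ j, (∑ i, (p1 i - p2 i) * Θ i j) ^ 2 / w0 j

/-- Feasible set of the Θ-problem: rows of `Θ` sum to `0`,
`(1/2)·Σ_i p1_i Σ_j Θ_{ij}²/w0_j ≤ ε1`, and `(1/2)·Σ_i p2_i Σ_j Θ_{ij}²/w0_j ≤ ε2`. -/
def ThetaFeas {M : ℕ} (p1 p2 : Fin M → ℝ) (ε1 ε2 : ℝ) (w0 : Fin M → ℝ) :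
    Set (Matrix (Fin M) (Fin M) ℝ) :=
  {Θ | (∀ i, ∑ j, Θ i j = 0) ∧
       (1 / 2) * ∑ i, p1 i * ∑ j, (Θ i j) ^ 2 / w0 j ≤ ε1 ∧
       (1 / 2) * ∑ i, p2 i * ∑ j, (Θ i j) ^ 2 / w0 j ≤ ε2}

/-- if `α*` is an optimal solution of the quadratic vector problem and
`v` is a unit vector orthogonal to `√w0`, then `Θ*_{ij} = α*_i v_j √(w0_j)` is
feasible for the Θ-problem (in particular each row sums to `0`) and optimal for it,
i.e. `G(Θ*)` equals the supremum of `G` over the feasible set of the Θ-problem. -/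
theorem optimal_theta {M : ℕ} (hM : 2 ≤ M)
    (p1 p2 : Fin M → ℝ)
    (hp1 : ∀ i, 0 ≤ p1 i) (hp1s : ∑ i, p1 i = 1)
    (hp2 : ∀ i, 0 ≤ p2 i) (hp2s : ∑ i, p2 i = 1)
    (ε1 ε2 : ℝ) (hε1 : 0 ≤ ε1) (hε2 : 0 ≤ ε2)
    (w0 : Fin M → ℝ) (hw0 : ∀ j, 0 < w0 j) (hw0s : ∑ j, w0 j = 1)
    (αs : Fin M → ℝ) (hαs_feas : αs ∈ QFeas p1 p2 ε1 ε2)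
    (hαs_opt : ∀ β ∈ QFeas p1 p2 ε1 ε2, Qobj p1 p2 β ≤ Qobj p1 p2 αs)
    (v : Fin M → ℝ) (hv_unit : ∑ j, (v j) ^ 2 = 1)
    (hv_orth : ∑ j, v j * Real.sqrt (w0 j) = 0) :
    (fun i j => αs i * v j * Real.sqrt (w0 j) : Matrix (Fin M) (Fin M) ℝ) ∈
        ThetaFeas p1 p2 ε1 ε2 w0 ∧
      Gobj p1 p2 w0 (fun i j => αs i * v j * Real.sqrt (w0 j)) =
        sSup (Gobj p1 p2 w0 '' ThetaFeas p1 p2 ε1 ε2 w0) := by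
  classical
  have hsq : ∀ j, Real.sqrt (w0 j) ^ 2 = w0 j := fun j => Real.sq_sqrt (hw0 j).le
  have hwne : ∀ j, w0 j ≠ 0 := fun j => (hw0 j).ne'
  set d : Fin M → ℝ := fun i => p1 i - p2 i with hd
  -- row norm identity
  have hrow : ∀ c : ℝ, ∑ j, (c * v j * Real.sqrt (w0 j)) ^ 2 / w0 j = c ^ 2 := by
    intro c
    have : ∀ j : Fin M, (c * v j * Real.sqrt (w0 j)) ^ 2 / w0 j = c ^ 2 * v j ^ 2 := by
      intro j
      rw [mul_pow, mul_pow, hsq j, mul_div_assoc, div_self (hwne j), mul_one]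
    rw [Finset.sum_congr rfl (fun j _ => this j), ← Finset.mul_sum, hv_unit, mul_one]
  -- feasibility of Θ*
  have hfeas : (fun i j => αs i * v j * Real.sqrt (w0 j) : Matrix (Fin M) (Fin M) ℝ) ∈
      ThetaFeas p1 p2 ε1 ε2 w0 := by
    refine ⟨fun i => ?_, ?_, ?_⟩
    · simp only [mul_assoc, ← Finset.mul_sum, hv_orth, mul_zero]
    · calc (1/2) * ∑ i, p1 i * ∑ j, (αs i * v j * Real.sqrt (w0 j)) ^ 2 / w0 j
          = (1/2) * ∑ i, p1 i * (αs i) ^ 2 := by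
            congr 1; exact Finset.sum_congr rfl fun i _ => by rw [hrow]
        _ ≤ ε1 := hαs_feas.1
    · calc (1/2) * ∑ i, p2 i * ∑ j, (αs i * v j * Real.sqrt (w0 j)) ^ 2 / w0 j
          = (1/2) * ∑ i, p2 i * (αs i) ^ 2 := by
            congr 1; exact Finset.sum_congr rfl fun i _ => by rw [hrow]
        _ ≤ ε2 := hαs_feas.2
  -- value of G at Θ*
  have hval : Gobj p1 p2 w0 (fun i j => αs i * v j * Real.sqrt (w0 j)) = Qobj p1 p2 αs := by
    unfold Gobj Qobj
    congr 1
    have h1 : ∀ j : Fin M, (∑ i, (p1 i - p2 i) * (αs i * v j * Real.sqrt (w0 j))) ^ 2 / w0 j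
        = ((∑ i, (p1 i - p2 i) * αs i) * v j * Real.sqrt (w0 j)) ^ 2 / w0 j := by
      intro j
      congr 2
      rw [Finset.sum_mul, Finset.sum_mul]
      exact Finset.sum_congr rfl fun i _ => by ring
    rw [Finset.sum_congr rfl (fun j _ => h1 j), hrow]
  -- upper bound
  have key : ∀ Θ ∈ ThetaFeas p1 p2 ε1 ε2 w0, Gobj p1 p2 w0 Θ ≤ Qobj p1 p2 αs := by
    rintro Θ ⟨hΘ0, hΘ1, hΘ2⟩
    set t : Fin M → ℝ := fun j => (∑ i, (p1 i - p2 i) * Θ i j) / Real.sqrt (w0 j) with ht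
    have hG : Gobj p1 p2 w0 Θ = (1/2) * ∑ j, t j ^ 2 := by
      unfold Gobj
      congr 1
      refine Finset.sum_congr rfl fun j _ => ?_
      rw [ht]
      simp only []
      rw [div_pow, hsq j]
    have hQnn : (0:ℝ) ≤ Qobj p1 p2 αs := mul_nonneg (by norm_num) (sq_nonneg _)
    set S : ℝ := Real.sqrt (∑ j, t j ^ 2) with hSdef
    have hS2 : S ^ 2 = ∑ j, t j ^ 2 :=
      Real.sq_sqrt (Finset.sum_nonneg fun j _ => sq_nonneg _)
    rcases eq_or_ne S 0 with hS | hS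
    · have h0 : ∑ j, t j ^ 2 = 0 := by rw [← hS2, hS]; ring
      rw [hG, h0, mul_zero]; exact hQnn
    · have hSpos : 0 < S := lt_of_le_of_ne (Real.sqrt_nonneg _) (Ne.symm hS)
      set α : Fin M → ℝ := fun i => ∑ j, (Θ i j / Real.sqrt (w0 j)) * (t j / S) with hα
      have hαsq : ∀ i, α i ^ 2 ≤ ∑ j, (Θ i j) ^ 2 / w0 j := by
        intro i
        have hcs := Finset.sum_mul_sq_le_sq_mul_sq Finset.univ
          (fun j => Θ i j / Real.sqrt (w0 j)) (fun j => t j / S)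
        have hu : ∑ j, (t j / S) ^ 2 = 1 := by
          rw [Finset.sum_congr rfl (fun j _ => div_pow (t j) S 2), ← Finset.sum_div,
            ← hS2, div_self (pow_ne_zero 2 hS)]
        calc α i ^ 2 ≤ (∑ j, (Θ i j / Real.sqrt (w0 j)) ^ 2) * ∑ j, (t j / S) ^ 2 := hcs
          _ = ∑ j, (Θ i j) ^ 2 / w0 j := by
              rw [hu, mul_one]
              exact Finset.sum_congr rfl fun j _ => by rw [div_pow, hsq j]
      have hαfeas : α ∈ QFeas p1 p2 ε1 ε2 := by
        constructor
        · calc (1/2) * ∑ i, p1 i * α i ^ 2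
              ≤ (1/2) * ∑ i, p1 i * ∑ j, (Θ i j) ^ 2 / w0 j := by
                gcongr (1/2) * ∑ i, p1 i * ?_ with i _
                · exact hp1 i
                · exact hαsq i
            _ ≤ ε1 := hΘ1
        · calc (1/2) * ∑ i, p2 i * α i ^ 2
              ≤ (1/2) * ∑ i, p2 i * ∑ j, (Θ i j) ^ 2 / w0 j := by
                gcongr (1/2) * ∑ i, p2 i * ?_ with i _
                · exact hp2 i
                · exact hαsq i
            _ ≤ ε2 := hΘ2
      have hsum : ∑ i, (p1 i - p2 i) * α i = S := by
        have hswap : ∑ i, (p1 i - p2 i) * α i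
            = ∑ j, (∑ i, (p1 i - p2 i) * Θ i j) / Real.sqrt (w0 j) * (t j / S) := by
          rw [hα]
          simp only [Finset.mul_sum]
          rw [Finset.sum_comm]
          refine Finset.sum_congr rfl fun j _ => ?_
          rw [Finset.sum_div, Finset.sum_mul]
          exact Finset.sum_congr rfl fun i _ => by ring
        rw [hswap]
        have : ∀ j : Fin M, (∑ i, (p1 i - p2 i) * Θ i j) / Real.sqrt (w0 j) * (t j / S)
            = t j ^ 2 / S := by
          intro j; rw [ht]; ring
        rw [Finset.sum_congr rfl (fun j _ => this j), ← Finset.sum_div, ← hS2,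
          sq, mul_div_assoc, div_self hS, mul_one]
      have := hαs_opt α hαfeas
      rw [hG, ← hS2]
      calc (1/2) * S ^ 2 = Qobj p1 p2 α := by unfold Qobj; rw [hsum]
        _ ≤ Qobj p1 p2 αs := this
  refine ⟨hfeas, ?_⟩
  have hgreat : IsGreatest (Gobj p1 p2 w0 '' ThetaFeas p1 p2 ε1 ε2 w0)
      (Gobj p1 p2 w0 (fun i j => αs i * v j * Real.sqrt (w0 j))) := by
    constructor
    · exact ⟨_, hfeas, rfl⟩
    · rintro x ⟨Θ, hΘ, rfl⟩
      rw [hval]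
      exact key Θ hΘ
  exact (hgreat.csSup_eq).symm
end
end

section
/- Let p1, p2 ∈ ℝ^M be strictly positive probability vectors with p1 ≠ p2, let ε1, ε2 > 0, let v* = (p1 − p2)/‖p1 − p2‖, and let S1 = Σ_{i=1}^M (v*_i)²/p1_i. If (Σ_{i=1}^M (v*_i)²·p2_i/(p1_i)²)/S1 < ε2/ε1, then the supremum of Q over the feasible set of the quadratic vector problem equals ε1·Σ_{i=1}^M (p1_i − p2_i)²/p1_i. -/
open Real

noncomputable section

/-- if `(Σ_i (v*_i)² p2_i/(p1_i)²)/S1 < ε2/ε1` with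
`S1 = Σ_i (v*_i)²/p1_i`, then the supremum of `Q` over the feasible set of the
quadratic vector problem equals `ε1·Σ_i (p1_i − p2_i)²/p1_i`. -/
theorem sup_value_first_constraint_active {M : ℕ}
    (p1 p2 : Fin M → ℝ)
    (hp1 : ∀ i, 0 < p1 i) (hp1s : ∑ i, p1 i = 1)
    (hp2 : ∀ i, 0 < p2 i) (hp2s : ∑ i, p2 i = 1)
    (hne : p1 ≠ p2)
    (ε1 ε2 : ℝ) (hε1 : 0 < ε1) (hε2 : 0 < ε2)
    (vs : Fin M → ℝ)
    (hvs : ∀ i, vs i = (p1 i - p2 i) / Real.sqrt (∑ k, (p1 k - p2 k) ^ 2))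
    (S1 : ℝ) (hS1 : S1 = ∑ i, (vs i) ^ 2 / p1 i)
    (hactive : (∑ i, (vs i) ^ 2 * p2 i / (p1 i) ^ 2) / S1 < ε2 / ε1) :
    sSup (Qobj p1 p2 '' QFeas p1 p2 ε1 ε2) =
      ε1 * ∑ i, (p1 i - p2 i) ^ 2 / p1 i := by
  set d : Fin M → ℝ := fun i => p1 i - p2 i with hd
  set T : ℝ := ∑ i, d i ^ 2 / p1 i with hT
  set N : ℝ := ∑ k, d k ^ 2 with hN
  -- there is an index with d i ≠ 0
  obtain ⟨i0, hi0⟩ : ∃ i, d i ≠ 0 := by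
    by_contra h
    push_neg at h
    exact hne (funext fun i => by have := h i; simp [hd] at this; linarith)
  have hNpos : 0 < N := by
    apply Finset.sum_pos' (fun i _ => sq_nonneg _)
    exact ⟨i0, Finset.mem_univ _, pow_two_pos_of_ne_zero hi0⟩
  have hTpos : 0 < T := by
    apply Finset.sum_pos' (fun i _ => div_nonneg (sq_nonneg _) (hp1 i).le)
    exact ⟨i0, Finset.mem_univ _, div_pos (pow_two_pos_of_ne_zero hi0) (hp1 i0)⟩
  -- rewrite vs squared
  have hvs2 : ∀ i, vs i ^ 2 = d i ^ 2 / N := by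
    intro i
    rw [hvs i, div_pow, Real.sq_sqrt hNpos.le]
  have hS1' : S1 = T / N := by
    rw [hS1, hT, Finset.sum_div]
    exact Finset.sum_congr rfl fun i _ => by rw [hvs2 i]; ring
  have hS1pos : 0 < S1 := by rw [hS1']; positivity
  -- translate hactive : ε1 * Σ d² p2 / p1² < ε2 * T
  have hkey : ε1 * (∑ i, d i ^ 2 * p2 i / p1 i ^ 2) < ε2 * T := by
    have hnum : (∑ i, (vs i) ^ 2 * p2 i / (p1 i) ^ 2)
        = (∑ i, d i ^ 2 * p2 i / p1 i ^ 2) / N := by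
      rw [Finset.sum_div]
      exact Finset.sum_congr rfl fun i _ => by rw [hvs2 i]; ring
    rw [hnum, hS1'] at hactive
    have heq : (∑ i, d i ^ 2 * p2 i / p1 i ^ 2) / N / (T / N)
        = (∑ i, d i ^ 2 * p2 i / p1 i ^ 2) / T := by
      field_simp
    rw [heq, div_lt_div_iff₀ hTpos hε1] at hactive
    linarith
  -- the optimal point
  set c : ℝ := Real.sqrt (2 * ε1 / T) with hc
  have hc2 : c ^ 2 = 2 * ε1 / T := Real.sq_sqrt (by positivity)
  set α : Fin M → ℝ := fun i => c * d i / p1 i with hα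
  have hsum1 : ∑ i, p1 i * α i ^ 2 = c ^ 2 * T := by
    rw [hT, Finset.mul_sum]
    refine Finset.sum_congr rfl fun i _ => ?_
    have := (hp1 i).ne'
    simp only [hα]
    field_simp
  have hsumd : ∑ i, d i * α i = c * T := by
    rw [hT, Finset.mul_sum]
    refine Finset.sum_congr rfl fun i _ => ?_
    have := (hp1 i).ne'
    simp only [hα]
    field_simp
  have hsum2 : ∑ i, p2 i * α i ^ 2 = c ^ 2 * ∑ i, d i ^ 2 * p2 i / p1 i ^ 2 := by
    rw [Finset.mul_sum]
    refine Finset.sum_congr rfl fun i _ => ?_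
    have := (hp1 i).ne'
    simp only [hα]
    field_simp
  have hmem : α ∈ QFeas p1 p2 ε1 ε2 := by
    constructor
    · rw [hsum1, hc2]
      rw [div_mul_cancel₀ _ hTpos.ne']
      linarith
    · rw [hsum2, hc2]
      have heq : (1 / 2 : ℝ) * (2 * ε1 / T * ∑ i, d i ^ 2 * p2 i / p1 i ^ 2)
          = ε1 * (∑ i, d i ^ 2 * p2 i / p1 i ^ 2) / T := by
        field_simp
      rw [heq, div_le_iff₀ hTpos]
      nlinarith
  have hval : Qobj p1 p2 α = ε1 * T := by
    unfold Qobj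
    have : (∑ i, (p1 i - p2 i) * α i) = c * T := hsumd
    rw [this]
    rw [mul_pow, hc2]
    field_simp
  -- upper bound
  have hub : ∀ q ∈ Qobj p1 p2 '' QFeas p1 p2 ε1 ε2, q ≤ ε1 * T := by
    rintro q ⟨β, hβ, rfl⟩
    unfold Qobj
    have hcs : (∑ i, (p1 i - p2 i) * β i) ^ 2 ≤ T * ∑ i, p1 i * β i ^ 2 := by
      have h := Finset.sum_mul_sq_le_sq_mul_sq Finset.univ
        (fun i => d i / Real.sqrt (p1 i)) (fun i => Real.sqrt (p1 i) * β i)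
      have e1 : ∀ i, d i / Real.sqrt (p1 i) * (Real.sqrt (p1 i) * β i) = (p1 i - p2 i) * β i := by
        intro i
        have : Real.sqrt (p1 i) ≠ 0 := Real.sqrt_ne_zero'.mpr (hp1 i)
        field_simp [hd]
        ring
      have e2 : ∀ i, (d i / Real.sqrt (p1 i)) ^ 2 = d i ^ 2 / p1 i := by
        intro i
        rw [div_pow, Real.sq_sqrt (hp1 i).le]
      have e3 : ∀ i, (Real.sqrt (p1 i) * β i) ^ 2 = p1 i * β i ^ 2 := by
        intro i
        rw [mul_pow, Real.sq_sqrt (hp1 i).le]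
      simp_rw [e1, e2, e3] at h
      exact h
    have h1 : ∑ i, p1 i * β i ^ 2 ≤ 2 * ε1 := by linarith [hβ.1]
    have : (∑ i, (p1 i - p2 i) * β i) ^ 2 ≤ T * (2 * ε1) :=
      hcs.trans (by nlinarith [le_of_lt hTpos])
    linarith
  have hgt : IsGreatest (Qobj p1 p2 '' QFeas p1 p2 ε1 ε2) (ε1 * T) :=
    ⟨⟨α, hmem, hval⟩, hub⟩
  rw [hgt.csSup_eq]
end
end

section
/- Let p1, p2 ∈ ℝ^M be strictly positive probability vectors with p1 ≠ p2, let ε1, ε2 > 0, let v* = (p1 − p2)/‖p1 − p2‖, and let S2 = Σ_{i=1}^M (v*_i)²/p2_i. If (Σ_{i=1}^M (v*_i)²·p1_i/(p2_i)²)/S2 < ε1/ε2, then the supremum of Q over the feasible set of the quadratic vector problem equals ε2·Σ_{i=1}^M (p1_i − p2_i)²/p2_i. -/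
open Real

noncomputable section

/-- if `(Σ_i (v*_i)² p1_i/(p2_i)²)/S2 < ε1/ε2` with
`S2 = Σ_i (v*_i)²/p2_i`, then the supremum of `Q` over the feasible set of the
quadratic vector problem equals `ε2·Σ_i (p1_i − p2_i)²/p2_i`. -/
theorem sup_value_second_constraint_active {M : ℕ}
    (p1 p2 : Fin M → ℝ)
    (hp1 : ∀ i, 0 < p1 i) (hp1s : ∑ i, p1 i = 1)
    (hp2 : ∀ i, 0 < p2 i) (hp2s : ∑ i, p2 i = 1)
    (hne : p1 ≠ p2)
    (ε1 ε2 : ℝ) (hε1 : 0 < ε1) (hε2 : 0 < ε2)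
    (vs : Fin M → ℝ)
    (hvs : ∀ i, vs i = (p1 i - p2 i) / Real.sqrt (∑ k, (p1 k - p2 k) ^ 2))
    (S2 : ℝ) (hS2 : S2 = ∑ i, (vs i) ^ 2 / p2 i)
    (hactive : (∑ i, (vs i) ^ 2 * p1 i / (p2 i) ^ 2) / S2 < ε1 / ε2) :
    sSup (Qobj p1 p2 '' QFeas p1 p2 ε1 ε2) =
      ε2 * ∑ i, (p1 i - p2 i) ^ 2 / p2 i := by
  classical
  set S : ℝ := ∑ i, (p1 i - p2 i) ^ 2 / p2 i with hSdef
  set T : ℝ := ∑ i, (p1 i - p2 i) ^ 2 * p1 i / p2 i ^ 2 with hTdef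
  obtain ⟨i0, hi0⟩ : ∃ i, p1 i - p2 i ≠ 0 := by
    by_contra h
    push_neg at h
    exact hne (funext fun i => by have := h i; linarith)
  have hN : 0 < ∑ k, (p1 k - p2 k) ^ 2 :=
    Finset.sum_pos' (fun i _ => sq_nonneg _) ⟨i0, Finset.mem_univ _, by positivity⟩
  have hSpos : 0 < S :=
    Finset.sum_pos' (fun i _ => div_nonneg (sq_nonneg _) (hp2 i).le)
      ⟨i0, Finset.mem_univ _, div_pos (by positivity) (hp2 i0)⟩
  have hvs2 : ∀ i, vs i ^ 2 = (p1 i - p2 i) ^ 2 / (∑ k, (p1 k - p2 k) ^ 2) := by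
    intro i
    rw [hvs i, div_pow, Real.sq_sqrt hN.le]
  have hnum : (∑ i, vs i ^ 2 * p1 i / p2 i ^ 2) = T / (∑ k, (p1 k - p2 k) ^ 2) := by
    rw [hTdef, Finset.sum_div]
    refine Finset.sum_congr rfl fun i _ => ?_
    rw [hvs2 i]; ring
  have hS2' : S2 = S / (∑ k, (p1 k - p2 k) ^ 2) := by
    rw [hS2, hSdef, Finset.sum_div]
    refine Finset.sum_congr rfl fun i _ => ?_
    rw [hvs2 i]; ring
  have hTS : T / S < ε1 / ε2 := by
    rw [hnum, hS2'] at hactive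
    have heq : T / (∑ k, (p1 k - p2 k) ^ 2) / (S / (∑ k, (p1 k - p2 k) ^ 2)) = T / S := by
      field_simp
    rwa [heq] at hactive
  have hTS' : ε2 * T < ε1 * S := by
    have := (div_lt_div_iff₀ hSpos hε2).mp hTS
    linarith
  -- upper bound
  have hub : ∀ q ∈ Qobj p1 p2 '' QFeas p1 p2 ε1 ε2, q ≤ ε2 * S := by
    rintro q ⟨α, ⟨h1, h2⟩, rfl⟩
    have hcs := Finset.sum_mul_sq_le_sq_mul_sq Finset.univ
      (fun i => (p1 i - p2 i) / Real.sqrt (p2 i)) (fun i => Real.sqrt (p2 i) * α i)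
    have h1' : ∀ i : Fin M,
        (p1 i - p2 i) / Real.sqrt (p2 i) * (Real.sqrt (p2 i) * α i) = (p1 i - p2 i) * α i := by
      intro i
      have : Real.sqrt (p2 i) ≠ 0 := (Real.sqrt_pos.mpr (hp2 i)).ne'
      field_simp
    have h2' : ∀ i : Fin M,
        ((p1 i - p2 i) / Real.sqrt (p2 i)) ^ 2 = (p1 i - p2 i) ^ 2 / p2 i := by
      intro i; rw [div_pow, Real.sq_sqrt (hp2 i).le]
    have h3' : ∀ i : Fin M, (Real.sqrt (p2 i) * α i) ^ 2 = p2 i * α i ^ 2 := by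
      intro i; rw [mul_pow, Real.sq_sqrt (hp2 i).le]
    simp only [h1', h2', h3'] at hcs
    have hsum2 : ∑ i, p2 i * α i ^ 2 ≤ 2 * ε2 := by linarith
    have hsnn : 0 ≤ ∑ i, p2 i * α i ^ 2 :=
      Finset.sum_nonneg fun i _ => mul_nonneg (hp2 i).le (sq_nonneg _)
    have : (∑ i, (p1 i - p2 i) * α i) ^ 2 ≤ S * (2 * ε2) := by
      calc (∑ i, (p1 i - p2 i) * α i) ^ 2 ≤ S * ∑ i, p2 i * α i ^ 2 := hcs
        _ ≤ S * (2 * ε2) := by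
            exact mul_le_mul_of_nonneg_left hsum2 hSpos.le
    rw [Qobj]
    linarith
  -- the maximizer
  set c : ℝ := Real.sqrt (2 * ε2 / S) with hcdef
  have hc2 : c ^ 2 = 2 * ε2 / S := Real.sq_sqrt (by positivity)
  set α0 : Fin M → ℝ := fun i => c * (p1 i - p2 i) / p2 i with hα0
  have hA : ∑ i, p2 i * α0 i ^ 2 = c ^ 2 * S := by
    rw [hSdef, Finset.mul_sum]
    refine Finset.sum_congr rfl fun i _ => ?_
    have : p2 i ≠ 0 := (hp2 i).ne'
    simp only [hα0]; field_simp
  have hB : ∑ i, p1 i * α0 i ^ 2 = c ^ 2 * T := by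
    rw [hTdef, Finset.mul_sum]
    refine Finset.sum_congr rfl fun i _ => ?_
    have : p2 i ≠ 0 := (hp2 i).ne'
    simp only [hα0]; field_simp
  have hC : ∑ i, (p1 i - p2 i) * α0 i = c * S := by
    rw [hSdef, Finset.mul_sum]
    refine Finset.sum_congr rfl fun i _ => ?_
    have : p2 i ≠ 0 := (hp2 i).ne'
    simp only [hα0]; field_simp
  have hfeas : α0 ∈ QFeas p1 p2 ε1 ε2 := by
    constructor
    · rw [hB, hc2]
      have heq : (1:ℝ) / 2 * (2 * ε2 / S * T) = ε2 * T / S := by ring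
      rw [heq, div_le_iff₀ hSpos]
      linarith
    · rw [hA, hc2]
      have : 2 * ε2 / S * S = 2 * ε2 := div_mul_cancel₀ _ hSpos.ne'
      rw [this]; linarith
  have hQval : Qobj p1 p2 α0 = ε2 * S := by
    rw [Qobj, hC, mul_pow, hc2]
    field_simp
  have hmem : ε2 * S ∈ Qobj p1 p2 '' QFeas p1 p2 ε1 ε2 := ⟨α0, hfeas, hQval⟩
  refine le_antisymm (Real.sSup_le hub (mul_nonneg hε2.le hSpos.le)) ?_
  exact le_csSup ⟨ε2 * S, fun q hq => hub q hq⟩ hmem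
end
end
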